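/- Let X and Y be Banach spaces and L : X → Y a bounded linear operator. Then χ(L(S_X)) = χ(L(B_X)), where S_X is the unit sphere and B_X the closed unit ball of X, and χ is the Hausdorff measure of noncompactness, provided X is nontrivial. -/

import Mathlib

open scoped Pointwise


/-- The Hausdorff measure of noncompactness:
`χ(Q) = inf {ε > 0 : Q has a finite ε-net in X}`. -/
noncomputable def hausdorffMNC {X : Type*} [MetricSpace X] (Q : Set X) : ℝ :=
  sInf {ε : ℝ | 0 < ε ∧ ∃ S : Finset X, ∀ x ∈ Q, ∃ s ∈ S, dist x s < ε}

theorem chi_image_sphere_eq_chi_image_ball {X Y : Type*}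
    [NormedAddCommGroup X] [NormedSpace ℝ X] [CompleteSpace X] [Nontrivial X]
    [NormedAddCommGroup Y] [NormedSpace ℝ Y] [CompleteSpace Y]
    (L : X →L[ℝ] Y) :
    hausdorffMNC (L '' Metric.sphere 0 1) = hausdorffMNC (L '' Metric.closedBall 0 1) := by
  classical
  set S : Set Y := L '' Metric.sphere 0 1 with hS
  set B : Set Y := L '' Metric.closedBall 0 1 with hB
  set AS : Set ℝ := {ε : ℝ | 0 < ε ∧ ∃ N : Finset Y, ∀ x ∈ S, ∃ s ∈ N, dist x s < ε} with hAS
  set AB : Set ℝ := {ε : ℝ | 0 < ε ∧ ∃ N : Finset Y, ∀ x ∈ B, ∃ s ∈ N, dist x s < ε} with hAB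
  -- a net for the ball is a net for the sphere
  have hsub : AB ⊆ AS := by
    rintro ε ⟨hε, N, hN⟩
    refine ⟨hε, N, fun y hy => hN y ?_⟩
    rcases hy with ⟨x, hx, rfl⟩
    exact ⟨x, Metric.sphere_subset_closedBall hx, rfl⟩
  -- AB is nonempty
  have hBne : (AB).Nonempty := by
    refine ⟨‖L‖ + 1, by positivity, {0}, ?_⟩
    rintro y ⟨x, hx, rfl⟩
    refine ⟨0, Finset.mem_singleton_self 0, ?_⟩
    rw [dist_zero_right]
    calc ‖L x‖ ≤ ‖L‖ * ‖x‖ := L.le_opNorm x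
      _ ≤ ‖L‖ * 1 := by
          have := Metric.mem_closedBall.mp hx
          rw [dist_zero_right] at this
          nlinarith [norm_nonneg L]
      _ < ‖L‖ + 1 := by nlinarith [norm_nonneg L]
  have hbdd : ∀ T : Set ℝ, T ⊆ AS ∪ AB → BddBelow T := by
    intro T hT
    exact ⟨0, fun x hx => by rcases hT hx with h | h <;> exact le_of_lt h.1⟩
  -- key geometric fact: B ⊆ convexHull ℝ S
  obtain ⟨w, hw⟩ := exists_norm_eq X (zero_le_one)
  have hwS : L w ∈ S := ⟨w, by simpa [Metric.mem_sphere, dist_zero_right] using hw, rfl⟩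
  have hnwS : L (-w) ∈ S := ⟨-w, by simpa [Metric.mem_sphere, dist_zero_right] using hw, rfl⟩
  have hc : Convex ℝ (convexHull ℝ S) := convex_convexHull ℝ S
  have h0 : (0 : Y) ∈ convexHull ℝ S := by
    have := hc (subset_convexHull ℝ S hwS) (subset_convexHull ℝ S hnwS)
      (by norm_num : (0:ℝ) ≤ 1/2) (by norm_num : (0:ℝ) ≤ 1/2) (by norm_num)
    simpa [map_neg, smul_neg] using this
  have hhull : B ⊆ convexHull ℝ S := by
    rintro y ⟨x, hx, rfl⟩
    have hx1 : ‖x‖ ≤ 1 := by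
      have := Metric.mem_closedBall.mp hx; rwa [dist_zero_right] at this
    by_cases hx0 : x = 0
    · simpa [hx0] using h0
    · have hu : L (‖x‖⁻¹ • x) ∈ S :=
        ⟨‖x‖⁻¹ • x, by simpa [Metric.mem_sphere, dist_zero_right] using
          (by rw [norm_smul, norm_inv, norm_norm, inv_mul_cancel₀ (norm_ne_zero_iff.mpr hx0)] : ‖‖x‖⁻¹ • x‖ = 1), rfl⟩
      have := hc (subset_convexHull ℝ S hu) h0 (norm_nonneg x)
        (by linarith : (0:ℝ) ≤ 1 - ‖x‖) (by ring)
      have hxne : ‖x‖ ≠ 0 := norm_ne_zero_iff.mpr hx0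
      simpa [map_smul, smul_smul, mul_inv_cancel₀ hxne, smul_zero] using this
    -- done
  -- main inequality: for ε admissible for S and δ > 0, ε + δ is admissible for B
  have key : ∀ ε ∈ AS, ∀ δ : ℝ, 0 < δ → ε + δ ∈ AB := by
    rintro ε ⟨hε, N, hN⟩ δ hδ
    have hScover : S ⊆ (↑N : Set Y) + Metric.ball (0:Y) ε := by
      intro y hy
      obtain ⟨s, hs, hd⟩ := hN y hy
      exact ⟨s, hs, y - s, by simpa [Metric.mem_ball, dist_zero_right, dist_eq_norm] using hd,
        by show s + (y - s) = y; abel⟩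
    have hBsub : B ⊆ convexHull ℝ (↑N : Set Y) + Metric.ball (0:Y) ε := by
      intro y hy
      have := convexHull_mono hScover (hhull hy)
      rwa [convexHull_add, (convex_ball (0:Y) ε).convexHull_eq] at this
    have hK : IsCompact (convexHull ℝ (↑N : Set Y)) :=
      N.finite_toSet.isCompact_convexHull (𝕜 := ℝ)
    obtain ⟨t, htf, htc⟩ := (Metric.totallyBounded_iff.mp hK.totallyBounded) δ hδ
    refine ⟨by linarith, htf.toFinset, ?_⟩
    intro y hy
    obtain ⟨a, ha, b, hb, rfl⟩ := hBsub hy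
    obtain ⟨m, hm, hdm⟩ := Set.mem_iUnion₂.mp (htc ha)
    refine ⟨m, htf.mem_toFinset.mpr hm, ?_⟩
    have hb' : ‖b‖ < ε := by simpa [Metric.mem_ball, dist_zero_right] using hb
    calc dist (a + b) m ≤ dist (a + b) a + dist a m := dist_triangle _ _ _
      _ < ε + δ := by
          have h1 : dist (a + b) a = ‖b‖ := by simp [dist_eq_norm]
          have h2 : dist a m < δ := Metric.mem_ball.mp hdm
          linarith
  refine le_antisymm ?_ ?_
  · exact csInf_le_csInf (hbdd AS Set.subset_union_left) hBne hsub
  · refine le_csInf ⟨_, hsub hBne.choose_spec⟩ ?_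
    intro ε hε
    refine le_of_forall_pos_le_add ?_
    intro δ hδ
    exact csInf_le (hbdd AB Set.subset_union_right) (key ε hε δ hδ)
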